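/- Let A, B be positive definite n×n complex matrices and t ∈ [0,1], with r = min{t, 1−t} and R = max{t, 1−t}. Then, in the Loewner order, 2r·(A ∇ B − A ♯ B) ≤ A ∇_t B − A ♯_t B ≤ 2R·(A ∇ B − A ♯ B). -/

import Mathlib

open Matrix ComplexOrder

/-- Real power of a (Hermitian) matrix via the continuous functional calculus. -/
noncomputable def mrpow {n : ℕ} (A : Matrix (Fin n) (Fin n) ℂ) (t : ℝ) :
    Matrix (Fin n) (Fin n) ℂ :=
  cfc (fun x : ℝ => x ^ t) A

/-- The weighted geometric mean `A ♯_t B = A^{1/2} (A^{-1/2} B A^{-1/2})^t A^{1/2}`. -/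
noncomputable def geomMean {n : ℕ} (A B : Matrix (Fin n) (Fin n) ℂ) (t : ℝ) :
    Matrix (Fin n) (Fin n) ℂ :=
  mrpow A (1 / 2) * mrpow (mrpow A (-(1 / 2)) * B * mrpow A (-(1 / 2))) t * mrpow A (1 / 2)

/-- The weighted arithmetic mean `A ∇_t B = (1-t)A + tB`. -/
noncomputable def arithMean {n : ℕ} (A B : Matrix (Fin n) (Fin n) ℂ) (t : ℝ) :
    Matrix (Fin n) (Fin n) ℂ :=
  (1 - t) • A + t • B

namespace Stmt8Aux

lemma amgm {u lam : ℝ} (hu : 0 ≤ u) (h0 : 0 ≤ lam) (h1 : lam ≤ 1) :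
    u ^ lam ≤ lam * u + (1 - lam) := by
  have := Real.geom_mean_le_arith_mean2_weighted h0 (by linarith : (0:ℝ) ≤ 1 - lam)
    hu zero_le_one (by ring)
  simpa using this

lemma key_low {x t : ℝ} (hx : 0 < x) (ht0 : 0 ≤ t) (ht1 : t ≤ 1) :
    min t (1 - t) * (1 + x - 2 * x ^ ((1:ℝ)/2)) ≤ (1 - t) + t * x - x ^ t := by
  have hsx : (0:ℝ) ≤ x ^ ((1:ℝ)/2) := Real.rpow_nonneg hx.le _
  rcases le_or_gt t (1/2) with h | h
  · rw [min_eq_left (by linarith)]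
    have h1 : (x ^ ((1:ℝ)/2)) ^ (2*t) ≤ (2*t) * x ^ ((1:ℝ)/2) + (1 - 2*t) :=
      amgm hsx (by linarith) (by linarith)
    rw [← Real.rpow_mul hx.le] at h1
    have he : (1:ℝ)/2 * (2*t) = t := by ring
    rw [he] at h1
    linarith
  · rw [min_eq_right (by linarith)]
    have h1 : x ^ (2*t-1) * (x ^ ((1:ℝ)/2)) ^ (2 - 2*t)
        ≤ (2*t-1) * x + (2 - 2*t) * x ^ ((1:ℝ)/2) :=
      Real.geom_mean_le_arith_mean2_weighted (by linarith) (by linarith) hx.le hsx (by ring)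
    rw [← Real.rpow_mul hx.le, ← Real.rpow_add hx] at h1
    have he : 2*t - 1 + (1/2) * (2 - 2*t) = t := by ring
    rw [he] at h1
    linarith

lemma key_high {x t : ℝ} (hx : 0 < x) (ht0 : 0 ≤ t) (ht1 : t ≤ 1) :
    (1 - t) + t * x - x ^ t ≤ max t (1 - t) * (1 + x - 2 * x ^ ((1:ℝ)/2)) := by
  have hsx : (0:ℝ) ≤ x ^ ((1:ℝ)/2) := Real.rpow_nonneg hx.le _
  have hxt : (0:ℝ) ≤ x ^ t := Real.rpow_nonneg hx.le _
  rcases le_or_gt t (1/2) with h | h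
  · rw [max_eq_right (by linarith)]
    have hs : (0:ℝ) < 2 * (1 - t) := by linarith
    have h1 : (x ^ t) ^ (1/(2*(1-t))) * x ^ ((1-2*t)/(2*(1-t)))
        ≤ (1/(2*(1-t))) * x ^ t + ((1-2*t)/(2*(1-t))) * x :=
      Real.geom_mean_le_arith_mean2_weighted (by positivity)
        (by apply div_nonneg <;> linarith) hxt hx.le (by field_simp [show (1:ℝ) - t ≠ 0 by linarith]; try ring)
    rw [← Real.rpow_mul hx.le, ← Real.rpow_add hx] at h1
    have he : t * (1/(2*(1-t))) + (1-2*t)/(2*(1-t)) = 1/2 := by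
      field_simp [show (1:ℝ) - t ≠ 0 by linarith]
      try ring
    rw [he] at h1
    have h2 := mul_le_mul_of_nonneg_left h1 hs.le
    have h3 : 2*(1-t) * ((1/(2*(1-t))) * x ^ t + ((1-2*t)/(2*(1-t))) * x)
        = x ^ t + (1-2*t) * x := by field_simp [show (1:ℝ) - t ≠ 0 by linarith]; try ring
    rw [h3] at h2
    linarith
  · rw [max_eq_left (by linarith)]
    have hs : (0:ℝ) < 2 * t := by linarith
    have h1 : (x ^ t) ^ (1/(2*t)) * (1:ℝ) ^ ((2*t-1)/(2*t))
        ≤ (1/(2*t)) * x ^ t + ((2*t-1)/(2*t)) * 1 :=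
      Real.geom_mean_le_arith_mean2_weighted (by positivity)
        (by apply div_nonneg <;> linarith) hxt zero_le_one (by field_simp; try ring)
    rw [Real.one_rpow, mul_one, ← Real.rpow_mul hx.le] at h1
    have he : t * (1/(2*t)) = 1/2 := by
      field_simp
      try ring
    rw [he] at h1
    have h2 := mul_le_mul_of_nonneg_left h1 hs.le
    have h3 : 2*t * ((1/(2*t)) * x ^ t + ((2*t-1)/(2*t)) * 1) = x ^ t + (2*t-1) := by
      field_simp; try ring
    rw [h3] at h2
    linarith

variable {n : ℕ}

lemma contOn (f : ℝ → ℝ) (A : Matrix (Fin n) (Fin n) ℂ) :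
    ContinuousOn f (spectrum ℝ A) :=
  Matrix.finite_real_spectrum.continuousOn f

lemma sa {A : Matrix (Fin n) (Fin n) ℂ} (h : A.IsHermitian) : IsSelfAdjoint A := h

lemma spectrum_pos {A : Matrix (Fin n) (Fin n) ℂ} (hA : A.PosDef) :
    ∀ x ∈ spectrum ℝ A, 0 < x := by
  intro x hx
  rw [hA.isHermitian.spectrum_real_eq_range_eigenvalues] at hx
  obtain ⟨i, rfl⟩ := hx
  exact hA.eigenvalues_pos i

lemma cfc_posSemidef {A : Matrix (Fin n) (Fin n) ℂ} (hA : A.IsHermitian) (f : ℝ → ℝ)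
    (hf : ∀ x ∈ spectrum ℝ A, 0 ≤ f x) : (cfc f A).PosSemidef := by
  rw [hA.cfc_eq]
  unfold Matrix.IsHermitian.cfc
  rw [Unitary.conjStarAlgAut_apply, star_eq_conjTranspose]
  refine Matrix.PosSemidef.mul_mul_conjTranspose_same ?_ _
  refine Matrix.PosSemidef.diagonal ?_
  intro i
  simp only [Pi.le_def, Pi.zero_apply, Function.comp_apply]
  rw [RCLike.nonneg_iff]
  constructor
  · simpa using hf _ (hA.eigenvalues_mem_spectrum_real i)
  · simp

lemma posDef_conj {S B : Matrix (Fin n) (Fin n) ℂ} (hS : S.IsHermitian)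
    (hB : B.PosDef) (hinj : ∀ x : Fin n → ℂ, x ≠ 0 → S *ᵥ x ≠ 0) :
    (S * B * S).PosDef := by
  refine PosDef.of_dotProduct_mulVec_pos ?_ ?_
  · show (S * B * S).IsHermitian
    unfold Matrix.IsHermitian
    rw [conjTranspose_mul, conjTranspose_mul, hS.eq, hB.isHermitian.eq, mul_assoc]
  · intro x hx
    have hy : S *ᵥ x ≠ 0 := hinj x hx
    have key : star x ⬝ᵥ (S * B * S) *ᵥ x = star (S *ᵥ x) ⬝ᵥ B *ᵥ (S *ᵥ x) := by
      rw [star_mulVec, hS.eq, ← mulVec_mulVec, ← mulVec_mulVec, dotProduct_mulVec]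
    rw [key]
    exact hB.dotProduct_mulVec_pos hy

lemma mrpow_mul_mrpow {A : Matrix (Fin n) (Fin n) ℂ} (hA : A.PosDef) (s u : ℝ) :
    mrpow A s * mrpow A u = mrpow A (s + u) := by
  unfold mrpow
  rw [← cfc_mul _ _ A (contOn _ _) (contOn _ _)]
  exact cfc_congr fun x hx => (Real.rpow_add (spectrum_pos hA x hx) s u).symm

lemma mrpow_zero {A : Matrix (Fin n) (Fin n) ℂ} (hA : A.PosDef) : mrpow A 0 = 1 := by
  unfold mrpow
  rw [cfc_congr (g := fun _ : ℝ => (1:ℝ)) fun x _ => Real.rpow_zero x]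
  exact cfc_const_one ℝ A (sa hA.isHermitian)

lemma mrpow_one {A : Matrix (Fin n) (Fin n) ℂ} (hA : A.PosDef) : mrpow A 1 = A := by
  unfold mrpow
  rw [cfc_congr (g := fun x : ℝ => x) fun x _ => Real.rpow_one x]
  exact cfc_id' ℝ A (sa hA.isHermitian)

lemma mrpow_isHermitian (A : Matrix (Fin n) (Fin n) ℂ) (s : ℝ) :
    (mrpow A s).IsHermitian :=
  cfc_predicate (fun x : ℝ => x ^ s) A

end Stmt8Aux

namespace Stmt8Aux

variable {n : ℕ}

lemma cfc_linear {C : Matrix (Fin n) (Fin n) ℂ} (hC : C.PosDef) (s : ℝ) :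
    cfc (fun x : ℝ => (1 - s) + s * x - x ^ s) C = (1 - s) • 1 + s • C - mrpow C s := by
  have hsa : IsSelfAdjoint C := sa hC.isHermitian
  rw [cfc_sub (fun x : ℝ => (1 - s) + s * x) (fun x : ℝ => x ^ s) C (contOn _ _) (contOn _ _)]
  rw [cfc_const_add (1 - s) (fun x : ℝ => s * x) C (contOn _ _) hsa]
  rw [cfc_const_mul_id s C hsa]
  rw [Algebra.algebraMap_eq_smul_one]
  rfl

lemma main_diff {A B : Matrix (Fin n) (Fin n) ℂ} (hA : A.PosDef) (hB : B.PosDef) (s : ℝ) :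
    arithMean A B s - geomMean A B s
      = mrpow A (1/2) * (cfc (fun x : ℝ => (1 - s) + s * x - x ^ s)
          (mrpow A (-(1/2)) * B * mrpow A (-(1/2)))) * mrpow A (1/2) := by
  set S := mrpow A (1/2) with hSdef
  set Si := mrpow A (-(1/2)) with hSidef
  set C := Si * B * Si with hCdef
  have hSSi : S * Si = 1 := by
    rw [hSdef, hSidef, mrpow_mul_mrpow hA]
    norm_num
    exact mrpow_zero hA
  have hSiS : Si * S = 1 := by
    rw [hSdef, hSidef, mrpow_mul_mrpow hA]
    norm_num
    exact mrpow_zero hA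
  have hSS : S * S = A := by
    rw [hSdef, mrpow_mul_mrpow hA]
    norm_num
    exact mrpow_one hA
  have hB' : S * C * S = B := by
    rw [hCdef]
    calc S * (Si * B * Si) * S = (S * Si) * B * (Si * S) := by noncomm_ring
    _ = B := by rw [hSSi, hSiS, one_mul, mul_one]
  have hCpd : C.PosDef := by
    refine posDef_conj (mrpow_isHermitian A _) hB ?_
    intro x hx h0
    apply hx
    have : (S * Si) *ᵥ x = x := by rw [hSSi, one_mulVec]
    rw [← this, ← mulVec_mulVec, h0, mulVec_zero]
  rw [cfc_linear hCpd s]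
  have hgeom : geomMean A B s = S * mrpow C s * S := rfl
  rw [arithMean, hgeom]
  rw [mul_sub, sub_mul, mul_add, add_mul]
  rw [Matrix.mul_smul, Matrix.smul_mul, Matrix.mul_smul, Matrix.smul_mul]
  rw [mul_one, hSS, hB']

end Stmt8Aux

namespace Stmt8Aux

lemma Cpos {n : ℕ} {A B : Matrix (Fin n) (Fin n) ℂ} (hA : A.PosDef) (hB : B.PosDef) :
    (mrpow A (-(1/2)) * B * mrpow A (-(1/2))).PosDef := by
  have hSSi : mrpow A (1/2) * mrpow A (-(1/2)) = 1 := by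
    rw [mrpow_mul_mrpow hA]
    norm_num
    exact mrpow_zero hA
  refine posDef_conj (mrpow_isHermitian A _) hB ?_
  intro x hx h0
  apply hx
  have : (mrpow A (1/2) * mrpow A (-(1/2))) *ᵥ x = x := by rw [hSSi, one_mulVec]
  rw [← this, ← mulVec_mulVec, h0, mulVec_zero]

end Stmt8Aux

open Stmt8Aux in
theorem stmt8 (n : ℕ) (A B : Matrix (Fin n) (Fin n) ℂ) (hA : A.PosDef) (hB : B.PosDef)
    (t : ℝ) (ht : t ∈ Set.Icc (0 : ℝ) 1)
    (r R : ℝ) (hr : r = min t (1 - t)) (hR : R = max t (1 - t)) :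
    ((arithMean A B t - geomMean A B t) -
        (2 * r) • (arithMean A B (1 / 2) - geomMean A B (1 / 2))).PosSemidef ∧
      ((2 * R) • (arithMean A B (1 / 2) - geomMean A B (1 / 2)) -
        (arithMean A B t - geomMean A B t)).PosSemidef := by
  obtain ⟨ht0, ht1⟩ := ht
  have hd := main_diff hA hB t
  have hd2 := main_diff hA hB (1/2)
  set S := mrpow A (1/2) with hSdef
  set C := mrpow A (-(1/2)) * B * mrpow A (-(1/2)) with hCdef
  have hCpd : C.PosDef := Cpos hA hB
  have hCsa : IsSelfAdjoint C := sa hCpd.isHermitian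
  have hSH : S.IsHermitian := mrpow_isHermitian A _
  set ft : ℝ → ℝ := fun x : ℝ => (1 - t) + t * x - x ^ t with hft
  set fh : ℝ → ℝ := fun x : ℝ => (1 - 1/2) + (1/2) * x - x ^ ((1:ℝ)/2) with hfh
  have conj_psd : ∀ M : Matrix (Fin n) (Fin n) ℂ, M.PosSemidef → (S * M * S).PosSemidef := by
    intro M hM
    have h2 := hM.conjTranspose_mul_mul_same S
    rwa [hSH.eq] at h2
  constructor
  · rw [hd, hd2]
    have e1 : cfc (fun x => ft x - (2*r) • fh x) C = cfc ft C - (2*r) • cfc fh C := by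
      rw [cfc_sub ft (fun x => (2*r) • fh x) C (contOn _ _) (contOn _ _),
        cfc_smul (2*r) fh C (contOn _ _)]
    have e2 : S * cfc (fun x => ft x - (2*r) • fh x) C * S
        = S * cfc ft C * S - (2*r) • (S * cfc fh C * S) := by
      rw [e1, mul_sub, sub_mul, Matrix.mul_smul, Matrix.smul_mul]
    rw [← e2]
    refine conj_psd _ (cfc_posSemidef hCpd.isHermitian _ ?_)
    intro x hx
    have hxpos := spectrum_pos hCpd x hx
    have hk := key_low hxpos ht0 ht1
    simp only [hft, hfh, smul_eq_mul]
    have e3 : (2*r)*((1 - 1/2) + (1/2)*x - x^((1:ℝ)/2))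
        = min t (1-t) * (1 + x - 2 * x^((1:ℝ)/2)) := by rw [hr]; ring
    linarith
  · rw [hd, hd2]
    have e1 : cfc (fun x => (2*R) • fh x - ft x) C = (2*R) • cfc fh C - cfc ft C := by
      rw [cfc_sub (fun x => (2*R) • fh x) ft C (contOn _ _) (contOn _ _),
        cfc_smul (2*R) fh C (contOn _ _)]
    have e2 : S * cfc (fun x => (2*R) • fh x - ft x) C * S
        = (2*R) • (S * cfc fh C * S) - S * cfc ft C * S := by
      rw [e1, mul_sub, sub_mul, Matrix.mul_smul, Matrix.smul_mul]
    rw [← e2]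
    refine conj_psd _ (cfc_posSemidef hCpd.isHermitian _ ?_)
    intro x hx
    have hxpos := spectrum_pos hCpd x hx
    have hk := key_high hxpos ht0 ht1
    simp only [hft, hfh, smul_eq_mul]
    have e3 : (2*R)*((1 - 1/2) + (1/2)*x - x^((1:ℝ)/2))
        = max t (1-t) * (1 + x - 2 * x^((1:ℝ)/2)) := by rw [hR]; ring
    linarith
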